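/- Let d ≥ 1 be an integer, α ∈ (0,2] and t > 0. If μ is a probability measure on ℝ^d whose characteristic function satisfies χ_μ(ξ) = (1 + ‖ξ‖^α)^{-t} for all ξ ∈ ℝ^d, then μ is self-decomposable: for every real b > 1 there exists a probability measure ρ_b on ℝ^d such that χ_μ(ξ) = χ_μ(b^{-1}ξ) · χ_{ρ_b}(ξ) for all ξ ∈ ℝ^d. -/

import Mathlib

open MeasureTheory

/-- The characteristic function of a measure `μ` on `ℝ^d`:
`χ_μ(ξ) = ∫ e^{i⟨ξ,x⟩} μ(dx)`. -/
noncomputable def charFunOf {d : ℕ} (μ : Measure (EuclideanSpace ℝ (Fin d)))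
    (ξ : EuclideanSpace ℝ (Fin d)) : ℂ :=
  ∫ x, Complex.exp (Complex.I * (inner ℝ ξ x : ℝ)) ∂μ

namespace GeomStableAux

/-! ### Generic facts about `charFunOf` -/

variable {d : ℕ}

lemma continuous_kernel (ξ : EuclideanSpace ℝ (Fin d)) :
    Continuous fun x : EuclideanSpace ℝ (Fin d) =>
      Complex.exp (Complex.I * (inner ℝ ξ x : ℝ)) :=
  Complex.continuous_exp.comp <| continuous_const.mul <|
    Complex.continuous_ofReal.comp <| continuous_const.inner continuous_id

lemma norm_kernel (ξ x : EuclideanSpace ℝ (Fin d)) :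
    ‖Complex.exp (Complex.I * (inner ℝ ξ x : ℝ))‖ = 1 := by
  rw [Complex.norm_exp]
  simp

lemma integrable_kernel (μ : Measure (EuclideanSpace ℝ (Fin d))) [IsFiniteMeasure μ]
    (ξ : EuclideanSpace ℝ (Fin d)) :
    Integrable (fun x => Complex.exp (Complex.I * (inner ℝ ξ x : ℝ))) μ := by
  refine ⟨(continuous_kernel ξ).aestronglyMeasurable, ?_⟩
  refine HasFiniteIntegral.of_bounded (C := 1) ?_
  filter_upwards with x
  rw [norm_kernel]

/-- convolution of two measures -/
noncomputable def conv (μ ν : Measure (EuclideanSpace ℝ (Fin d))) :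
    Measure (EuclideanSpace ℝ (Fin d)) :=
  Measure.map (fun p : _ × _ => p.1 + p.2) (μ.prod ν)

instance conv_prob (μ ν : Measure (EuclideanSpace ℝ (Fin d)))
    [IsProbabilityMeasure μ] [IsProbabilityMeasure ν] : IsProbabilityMeasure (conv μ ν) :=
  Measure.isProbabilityMeasure_map (continuous_add.measurable.aemeasurable)

lemma charFunOf_conv (μ ν : Measure (EuclideanSpace ℝ (Fin d)))
    [IsProbabilityMeasure μ] [IsProbabilityMeasure ν] (ξ : EuclideanSpace ℝ (Fin d)) :
    charFunOf (conv μ ν) ξ = charFunOf μ ξ * charFunOf ν ξ := by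
  rw [charFunOf, conv,
    integral_map continuous_add.measurable.aemeasurable
      (continuous_kernel ξ).aestronglyMeasurable]
  have h : ∀ p : EuclideanSpace ℝ (Fin d) × EuclideanSpace ℝ (Fin d),
      Complex.exp (Complex.I * (inner ℝ ξ (p.1 + p.2) : ℝ))
        = Complex.exp (Complex.I * (inner ℝ ξ p.1 : ℝ)) *
          Complex.exp (Complex.I * (inner ℝ ξ p.2 : ℝ)) := by
    intro p
    rw [← Complex.exp_add, inner_add_right]
    push_cast
    ring_nf
  simp_rw [h]
  exact integral_prod_mul (L := ℂ) (μ := μ) (ν := ν)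
    (fun x => Complex.exp (Complex.I * (inner ℝ ξ x : ℝ)))
    (fun y => Complex.exp (Complex.I * (inner ℝ ξ y : ℝ)))

/-- `n`-fold convolution power. -/
noncomputable def convPow (μ : Measure (EuclideanSpace ℝ (Fin d))) : ℕ →
    Measure (EuclideanSpace ℝ (Fin d))
  | 0 => Measure.dirac 0
  | n + 1 => conv μ (convPow μ n)

instance convPow_prob (μ : Measure (EuclideanSpace ℝ (Fin d))) [IsProbabilityMeasure μ]
    (n : ℕ) : IsProbabilityMeasure (convPow μ n) := by
  induction n with
  | zero => exact Measure.dirac.isProbabilityMeasure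
  | succ n ih => exact conv_prob _ _

lemma charFunOf_convPow (μ : Measure (EuclideanSpace ℝ (Fin d))) [IsProbabilityMeasure μ]
    (n : ℕ) (ξ : EuclideanSpace ℝ (Fin d)) :
    charFunOf (convPow μ n) ξ = (charFunOf μ ξ) ^ n := by
  induction n with
  | zero => simp [convPow, charFunOf, integral_dirac]
  | succ n ih => rw [convPow, charFunOf_conv, ih, pow_succ]; ring

/-- scale mixture: apply random scale `φ v` to a sample of `base`. -/
noncomputable def scaleMix (φ : ℝ → ℝ) (π : Measure ℝ)
    (base : Measure (EuclideanSpace ℝ (Fin d))) : Measure (EuclideanSpace ℝ (Fin d)) :=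
  Measure.map (fun q : ℝ × EuclideanSpace ℝ (Fin d) => φ q.1 • q.2) (π.prod base)

lemma scaleMix_meas {φ : ℝ → ℝ} (hφ : Measurable φ) :
    Measurable fun q : ℝ × EuclideanSpace ℝ (Fin d) => φ q.1 • q.2 :=
  (hφ.comp measurable_fst).smul measurable_snd

lemma scaleMix_isProb {φ : ℝ → ℝ} (hφ : Measurable φ) (π : Measure ℝ) [IsProbabilityMeasure π]
    (base : Measure (EuclideanSpace ℝ (Fin d))) [IsProbabilityMeasure base] :
    IsProbabilityMeasure (scaleMix φ π base) :=
  Measure.isProbabilityMeasure_map (scaleMix_meas hφ).aemeasurable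

lemma charFunOf_scaleMix {φ : ℝ → ℝ} (hφ : Measurable φ) (π : Measure ℝ)
    [IsProbabilityMeasure π] (base : Measure (EuclideanSpace ℝ (Fin d)))
    [IsProbabilityMeasure base] (ξ : EuclideanSpace ℝ (Fin d)) :
    charFunOf (scaleMix φ π base) ξ = ∫ v, charFunOf base (φ v • ξ) ∂π := by
  rw [charFunOf, scaleMix,
    integral_map (scaleMix_meas hφ).aemeasurable (continuous_kernel ξ).aestronglyMeasurable]
  have hmeas : Measurable fun q : ℝ × EuclideanSpace ℝ (Fin d) =>
      Complex.exp (Complex.I * (inner ℝ ξ (φ q.1 • q.2) : ℝ)) := by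
    have h1 : Measurable fun q : ℝ × EuclideanSpace ℝ (Fin d) =>
        (inner ℝ ξ (φ q.1 • q.2) : ℝ) := by
      simp_rw [real_inner_smul_right]
      exact (hφ.comp measurable_fst).mul
        ((Continuous.inner continuous_const continuous_id).measurable.comp measurable_snd)
    exact (Complex.continuous_exp.comp
      (continuous_const.mul Complex.continuous_ofReal)).measurable.comp h1
  have hint : Integrable
      (fun q : ℝ × EuclideanSpace ℝ (Fin d) =>
        Complex.exp (Complex.I * (inner ℝ ξ (φ q.1 • q.2) : ℝ))) (π.prod base) := by
    refine ⟨hmeas.aestronglyMeasurable, ?_⟩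
    refine HasFiniteIntegral.of_bounded (C := 1) ?_
    filter_upwards with q
    rw [norm_kernel]
  rw [integral_prod _ hint]
  congr 1
  ext v
  rw [charFunOf]
  congr 1
  ext x
  rw [real_inner_smul_right, real_inner_smul_left]

lemma norm_rpow_smul {α : ℝ} (hα : 0 < α) {v : ℝ} (hv : 0 ≤ v)
    (ξ : EuclideanSpace ℝ (Fin d)) :
    ‖(v ^ α⁻¹) • ξ‖ ^ α = v * ‖ξ‖ ^ α := by
  rw [norm_smul, Real.norm_eq_abs, abs_of_nonneg (Real.rpow_nonneg hv _),
    Real.mul_rpow (Real.rpow_nonneg hv _) (norm_nonneg _),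
    ← Real.rpow_mul hv, inv_mul_cancel₀ hα.ne', Real.rpow_one]

/-! ### Explicit interval-integral identities -/

lemma betaIdentity {p s : ℝ} (hp : 2 ≤ p) (hs : 0 ≤ s) :
    ∫ v in (0:ℝ)..1, (p-1) * (1-v) ^ (p-2) * (1+v*s) ^ (-p) = (1+s)⁻¹ := by
  have hs1 : (0:ℝ) < 1 + s := by linarith
  have hp1 : (0:ℝ) < p - 1 := by linarith
  set F : ℝ → ℝ := fun v => (1+s)⁻¹ * (1 - (1-v) ^ (p-1) * (1+v*s) ^ (1-p)) with hF
  have hbase : ∀ v : ℝ, 0 ≤ v → (0:ℝ) < 1 + v * s := by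
    intro v hv; nlinarith
  have hcontF : ContinuousOn F (Set.Icc 0 1) := by
    refine continuousOn_const.mul (continuousOn_const.sub (ContinuousOn.mul ?_ ?_))
    · exact (continuous_const.sub continuous_id).continuousOn.rpow_const
        (fun x hx => Or.inr (by linarith))
    · refine ContinuousOn.rpow_const ?_ (fun x hx => Or.inl ?_)
      · exact (continuous_const.add (continuous_id.mul continuous_const)).continuousOn
      · exact (hbase x hx.1).ne'
  have hderiv : ∀ v ∈ Set.Ioo (0:ℝ) 1, HasDerivAt F
      ((p-1) * (1-v) ^ (p-2) * (1+v*s) ^ (-p)) v := by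
    intro v hv
    have hv1 : (0:ℝ) < 1 - v := by linarith [hv.2]
    have hv2 : (0:ℝ) < 1 + v * s := hbase v hv.1.le
    have h1 : HasDerivAt (fun v : ℝ => 1 - v) (-1) v := by
      simpa using (hasDerivAt_id v).const_sub 1
    have h2 : HasDerivAt (fun v : ℝ => (1-v) ^ (p-1))
        (-1 * (p-1) * (1-v) ^ (p-1-1)) v := h1.rpow_const (Or.inl hv1.ne')
    have h3 : HasDerivAt (fun v : ℝ => 1 + v * s) s v := by
      simpa using ((hasDerivAt_id v).mul_const s).const_add 1
    have h4 : HasDerivAt (fun v : ℝ => (1+v*s) ^ (1-p))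
        (s * (1-p) * (1+v*s) ^ (1-p-1)) v := h3.rpow_const (Or.inl hv2.ne')
    have h5 := (h2.mul h4).const_mul (1+s)⁻¹
    have h6 := h5.const_sub ((1+s)⁻¹ * 1)
    have h7 : HasDerivAt F (-((1+s)⁻¹ *
        (-1 * (p-1) * (1-v) ^ (p-1-1) * (1+v*s) ^ (1-p)
          + (1-v) ^ (p-1) * (s * (1-p) * (1+v*s) ^ (1-p-1))))) v := by
      have : F = fun v => (1+s)⁻¹ * 1 - (1+s)⁻¹ * ((1-v) ^ (p-1) * (1+v*s) ^ (1-p)) := by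
        funext w; rw [hF]; ring
      rw [this]
      exact h6
    convert h7 using 1
    have e1 : (1-v) ^ (p-1) = (1-v) ^ (p-2) * (1-v) := by
      rw [← Real.rpow_add_one hv1.ne' (p-2)]; ring_nf
    have e2 : (1+v*s) ^ (1-p) = (1+v*s) ^ (-p) * (1+v*s) := by
      rw [← Real.rpow_add_one hv2.ne' (-p)]; ring_nf
    have e3 : (1+v*s) ^ (1-p-1) = (1+v*s) ^ (-p) := by norm_num
    have e4 : (1-v) ^ (p-1-1) = (1-v) ^ (p-2) := by rw [show p-1-1 = p-2 by ring]
    rw [e3, e4, e1, e2]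
    field_simp
    ring
  have hint : IntervalIntegrable (fun v => (p-1) * (1-v) ^ (p-2) * (1+v*s) ^ (-p))
      volume 0 1 := by
    apply ContinuousOn.intervalIntegrable
    rw [Set.uIcc_of_le (by norm_num)]
    refine (continuousOn_const.mul ((continuous_const.sub continuous_id).continuousOn.rpow_const
      (fun x hx => Or.inr (by linarith)))).mul
      (ContinuousOn.rpow_const
        (continuous_const.add (continuous_id.mul continuous_const)).continuousOn
        (fun x hx => Or.inl (hbase x hx.1).ne'))
  have := intervalIntegral.integral_eq_sub_of_hasDerivAt_of_le (by norm_num : (0:ℝ) ≤ 1)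
    hcontF hderiv hint
  rw [this, hF]
  norm_num
  rw [Real.zero_rpow (by linarith : p - 1 ≠ 0)]
  norm_num

lemma logIdentity {c s : ℝ} (hc : 0 < c) (hc1 : c ≤ 1) (hs : 0 ≤ s) :
    ∫ u in c..1, u⁻¹ * (1+u*s)⁻¹
      = Real.log (1+c*s) - Real.log c - Real.log (1+s) := by
  have hbase : ∀ u : ℝ, 0 < u → (0:ℝ) < 1 + u * s := by intro u hu; nlinarith
  set F : ℝ → ℝ := fun u => Real.log u - Real.log (1+u*s) with hF
  have hcontF : ContinuousOn F (Set.Icc c 1) := by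
    refine ContinuousOn.sub ?_ ?_
    · exact Real.continuousOn_log.mono (fun x hx => by
        simp only [Set.mem_compl_iff, Set.mem_singleton_iff]
        exact (lt_of_lt_of_le hc hx.1).ne')
    · refine ContinuousOn.log
        (continuous_const.add (continuous_id.mul continuous_const)).continuousOn
        (fun x hx => (hbase x (lt_of_lt_of_le hc hx.1)).ne')
  have hderiv : ∀ u ∈ Set.Ioo c 1, HasDerivAt F (u⁻¹ * (1+u*s)⁻¹) u := by
    intro u hu
    have hu0 : 0 < u := lt_trans hc hu.1
    have hu2 : (0:ℝ) < 1 + u * s := hbase u hu0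
    have h1 : HasDerivAt Real.log u⁻¹ u := Real.hasDerivAt_log hu0.ne'
    have h3 : HasDerivAt (fun u : ℝ => 1 + u * s) s u := by
      simpa using ((hasDerivAt_id u).mul_const s).const_add 1
    have h4 : HasDerivAt (fun u : ℝ => Real.log (1+u*s)) (s / (1+u*s)) u := h3.log hu2.ne'
    have h5 := h1.sub h4
    refine HasDerivAt.congr_deriv h5 ?_
    rw [inv_eq_one_div, inv_eq_one_div, div_mul_div_comm, div_sub_div _ _ hu0.ne' hu2.ne']
    congr 1 <;> ring
  have hint : IntervalIntegrable (fun u : ℝ => u⁻¹ * (1+u*s)⁻¹) volume c 1 := by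
    apply ContinuousOn.intervalIntegrable
    rw [Set.uIcc_of_le hc1]
    refine ContinuousOn.mul (continuousOn_inv₀.mono (fun x hx => ?_))
      (ContinuousOn.inv₀
        (continuous_const.add (continuous_id.mul continuous_const)).continuousOn
        (fun x hx => (hbase x (lt_of_lt_of_le hc hx.1)).ne'))
    · simp only [Set.mem_compl_iff, Set.mem_singleton_iff]
      exact (lt_of_lt_of_le hc hx.1).ne'
  have := intervalIntegral.integral_eq_sub_of_hasDerivAt_of_le hc1 hcontF hderiv hint
  rw [this, hF]
  simp [Real.log_one]
  ring

/-! ### Density measures on an interval -/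

noncomputable def densMeasure (g : ℝ → ℝ) (a b : ℝ) : Measure ℝ :=
  volume.withDensity (fun v => ENNReal.ofReal (Set.indicator (Set.Ioc a b) g v))

lemma densMeasure_isProb {g : ℝ → ℝ} {a b : ℝ} (hab : a ≤ b)
    (hg0 : ∀ v ∈ Set.Ioc a b, 0 ≤ g v)
    (hint : IntervalIntegrable g volume a b)
    (h1 : ∫ v in a..b, g v = 1) :
    IsProbabilityMeasure (densMeasure g a b) := by
  constructor
  rw [densMeasure, withDensity_apply _ MeasurableSet.univ, Measure.restrict_univ]
  have hInt : Integrable (Set.indicator (Set.Ioc a b) g) volume :=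
    (hint.1).integrable_indicator measurableSet_Ioc
  have hnn : 0 ≤ᶠ[ae volume] Set.indicator (Set.Ioc a b) g := by
    filter_upwards with v
    by_cases hv : v ∈ Set.Ioc a b
    · rw [Set.indicator_of_mem hv]; exact hg0 v hv
    · rw [Set.indicator_of_notMem hv]; exact le_refl _
  rw [← ofReal_integral_eq_lintegral_ofReal hInt hnn,
    integral_indicator measurableSet_Ioc, ← intervalIntegral.integral_of_le hab, h1]
  norm_num

lemma integral_densMeasure {g : ℝ → ℝ} {a b : ℝ} (hg : Measurable g) (hab : a ≤ b)
    (hg0 : ∀ v ∈ Set.Ioc a b, 0 ≤ g v) (F : ℝ → ℂ) :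
    ∫ v, F v ∂(densMeasure g a b) = ∫ v in a..b, (g v : ℂ) * F v := by
  have hmeas : Measurable fun v => (Set.indicator (Set.Ioc a b) g v).toNNReal :=
    (hg.indicator measurableSet_Ioc).real_toNNReal
  have hcoe : (fun v => ENNReal.ofReal (Set.indicator (Set.Ioc a b) g v))
      = fun v => ((Set.indicator (Set.Ioc a b) g v).toNNReal : ENNReal) := rfl
  rw [densMeasure, hcoe, integral_withDensity_eq_integral_smul hmeas]
  have hpt : ∀ v, (Set.indicator (Set.Ioc a b) g v).toNNReal • F v
      = Set.indicator (Set.Ioc a b) (fun v => (g v : ℂ) * F v) v := by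
    intro v
    by_cases hv : v ∈ Set.Ioc a b
    · rw [Set.indicator_of_mem hv, Set.indicator_of_mem hv, NNReal.smul_def,
        Real.coe_toNNReal _ (hg0 v hv)]
      simp [Complex.real_smul]
    · rw [Set.indicator_of_notMem hv, Set.indicator_of_notMem hv]
      simp
  simp_rw [hpt]
  rw [integral_indicator measurableSet_Ioc, ← intervalIntegral.integral_of_le hab]

end GeomStableAux

open GeomStableAux

theorem geometric_stable_selfdecomposable {d : ℕ} (hd : 1 ≤ d) {α t : ℝ}
    (hα : α ∈ Set.Ioc (0 : ℝ) 2) (ht : 0 < t)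
    (μ : Measure (EuclideanSpace ℝ (Fin d))) [IsProbabilityMeasure μ]
    (hχ : ∀ ξ : EuclideanSpace ℝ (Fin d),
      charFunOf μ ξ = ((((1 + ‖ξ‖ ^ α) ^ t)⁻¹ : ℝ) : ℂ)) :
    ∀ b : ℝ, 1 < b → ∃ ρ : Measure (EuclideanSpace ℝ (Fin d)),
      IsProbabilityMeasure ρ ∧
      ∀ ξ : EuclideanSpace ℝ (Fin d),
        charFunOf μ ξ = charFunOf μ (b⁻¹ • ξ) * charFunOf ρ ξ := by
  obtain ⟨hα0, hα2⟩ := hα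
  intro b hb
  have hb0 : (0:ℝ) < b := lt_trans one_pos hb
  have hbi0 : (0:ℝ) < b⁻¹ := inv_pos.mpr hb0
  have hbi1 : b⁻¹ < 1 := by
    rw [inv_lt_one_iff₀]; right; exact hb
  set c : ℝ := b⁻¹ ^ α with hcdef
  have hc0 : 0 < c := Real.rpow_pos_of_pos hbi0 α
  have hc1 : c < 1 := Real.rpow_lt_one hbi0.le hbi1 hα0
  set L : ℝ := -Real.log c with hLdef
  have hL : 0 < L := neg_pos.mpr (Real.log_neg hc0 hc1)
  have hlogc : Real.log c = -L := by rw [hLdef]; ring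
  set lam : ℝ := t * L with hlamdef
  have hlam0 : 0 ≤ lam := by positivity
  set n : ℕ := ⌈2 / t⌉₊ with hndef
  set p : ℝ := t * n with hpdef
  have hp2 : 2 ≤ p := by
    have h := Nat.le_ceil (2 / t)
    calc (2:ℝ) = (2 / t) * t := by field_simp
    _ ≤ (n:ℝ) * t := mul_le_mul_of_nonneg_right h ht.le
    _ = p := by rw [hpdef]; ring
  -- the n-fold convolution of μ
  set μn := convPow μ n with hμndef
  haveI : IsProbabilityMeasure μn := convPow_prob μ n
  have hμn : ∀ ζ : EuclideanSpace ℝ (Fin d),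
      charFunOf μn ζ = ((((1 + ‖ζ‖ ^ α) ^ p)⁻¹ : ℝ) : ℂ) := by
    intro ζ
    rw [hμndef, charFunOf_convPow, hχ, ← Complex.ofReal_pow]
    congr 1
    rw [inv_pow, ← Real.rpow_natCast ((1 + ‖ζ‖ ^ α) ^ t) n,
      ← Real.rpow_mul (by positivity)]
  -- the Beta(1, p-1)-type mixing measure and the exponent-one base measure ν
  set g1 : ℝ → ℝ := fun v => (p-1) * (1-v) ^ (p-2) with hg1def
  have hg1meas : Measurable g1 := by fun_prop
  have hg1nn : ∀ v ∈ Set.Ioc (0:ℝ) 1, 0 ≤ g1 v := by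
    intro v hv
    have h1 : (0:ℝ) ≤ 1 - v := by linarith [hv.2]
    have h2 : (0:ℝ) ≤ p - 1 := by linarith
    rw [hg1def]
    positivity
  have hg1int : IntervalIntegrable g1 volume 0 1 := by
    apply ContinuousOn.intervalIntegrable
    rw [Set.uIcc_of_le zero_le_one]
    exact continuousOn_const.mul
      ((continuous_const.sub continuous_id).continuousOn.rpow_const
        (fun x hx => Or.inr (by linarith)))
  have hg1sum : ∫ v in (0:ℝ)..1, g1 v = 1 := by
    have h0 := betaIdentity (s := 0) hp2 le_rfl
    simp only [mul_zero, add_zero, Real.one_rpow, mul_one] at h0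
    rw [hg1def]
    simpa using h0
  have hphimeas : Measurable fun v : ℝ => v ^ α⁻¹ := by fun_prop
  set θ := densMeasure g1 0 1 with hθdef
  haveI hθP : IsProbabilityMeasure θ :=
    densMeasure_isProb zero_le_one hg1nn hg1int hg1sum
  set ν := scaleMix (fun v => v ^ α⁻¹) θ μn with hνdef
  haveI hνP : IsProbabilityMeasure ν := scaleMix_isProb hphimeas _ _
  have hν : ∀ ζ : EuclideanSpace ℝ (Fin d),
      charFunOf ν ζ = (((1 + ‖ζ‖ ^ α)⁻¹ : ℝ) : ℂ) := by
    intro ζ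
    have hs : 0 ≤ ‖ζ‖ ^ α := Real.rpow_nonneg (norm_nonneg _) _
    rw [hνdef, charFunOf_scaleMix hphimeas, hθdef,
      integral_densMeasure hg1meas zero_le_one hg1nn]
    have heq : Set.EqOn (fun v : ℝ => (g1 v : ℂ) * charFunOf μn ((v ^ α⁻¹) • ζ))
        (fun v : ℝ => (((p-1) * (1-v) ^ (p-2) * (1+v*‖ζ‖^α) ^ (-p) : ℝ) : ℂ))
        (Set.uIcc 0 1) := by
      intro v hv
      rw [Set.uIcc_of_le zero_le_one] at hv
      simp only
      rw [hμn, norm_rpow_smul hα0 hv.1, ← Complex.ofReal_mul]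
      congr 1
      have hvs : (0:ℝ) ≤ 1 + v * ‖ζ‖ ^ α := by
        have := mul_nonneg hv.1 hs
        linarith
      rw [Real.rpow_neg hvs, hg1def]
    rw [intervalIntegral.integral_congr heq, intervalIntegral.integral_ofReal,
      betaIdentity hp2 hs]
  -- the logarithmic mixing measure and the compound-Poisson jump measure νh
  set g2 : ℝ → ℝ := fun u => L⁻¹ * u⁻¹ with hg2def
  have hg2meas : Measurable g2 := by fun_prop
  have hg2nn : ∀ u ∈ Set.Ioc c 1, 0 ≤ g2 u := by
    intro u hu
    have hu0 : 0 < u := lt_of_lt_of_le hc0 hu.1.le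
    rw [hg2def]
    positivity
  have hg2int : IntervalIntegrable g2 volume c 1 := by
    apply ContinuousOn.intervalIntegrable
    rw [Set.uIcc_of_le hc1.le]
    exact continuousOn_const.mul (continuousOn_inv₀.mono (fun x hx => by
      simp only [Set.mem_compl_iff, Set.mem_singleton_iff]
      exact (lt_of_lt_of_le hc0 hx.1).ne'))
  have hg2sum : ∫ u in c..1, g2 u = 1 := by
    have h0 := logIdentity (s := 0) hc0 hc1.le le_rfl
    simp only [mul_zero, add_zero, inv_one, mul_one, Real.log_one] at h0
    rw [hg2def, intervalIntegral.integral_const_mul, h0, hlogc]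
    field_simp
    ring
  set σθ := densMeasure g2 c 1 with hσdef
  haveI hσP : IsProbabilityMeasure σθ :=
    densMeasure_isProb hc1.le hg2nn hg2int hg2sum
  set νh := scaleMix (fun u => u ^ α⁻¹) σθ ν with hνhdef
  haveI hνhP : IsProbabilityMeasure νh := scaleMix_isProb hphimeas _ _
  have hνh : ∀ ξ : EuclideanSpace ℝ (Fin d),
      charFunOf νh ξ = (((1 - L⁻¹ * (Real.log (1+‖ξ‖^α) - Real.log (1+c*‖ξ‖^α)) : ℝ)) : ℂ) := by
    intro ξ
    have hs : 0 ≤ ‖ξ‖ ^ α := Real.rpow_nonneg (norm_nonneg _) _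
    rw [hνhdef, charFunOf_scaleMix hphimeas, hσdef,
      integral_densMeasure hg2meas hc1.le hg2nn]
    have heq2 : Set.EqOn (fun u : ℝ => (g2 u : ℂ) * charFunOf ν ((u ^ α⁻¹) • ξ))
        (fun u : ℝ => ((L⁻¹ * (u⁻¹ * (1+u*‖ξ‖^α)⁻¹) : ℝ) : ℂ))
        (Set.uIcc c 1) := by
      intro u hu
      rw [Set.uIcc_of_le hc1.le] at hu
      simp only
      rw [hν, norm_rpow_smul hα0 (le_trans hc0.le hu.1), ← Complex.ofReal_mul]
      congr 1
      rw [hg2def]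
      ring
    rw [intervalIntegral.integral_congr heq2, intervalIntegral.integral_ofReal]
    congr 1
    rw [intervalIntegral.integral_const_mul, logIdentity hc0 hc1.le hs, hlogc]
    field_simp
    ring
  -- the compound Poisson measure ρ
  have hexpsum : ∀ y : ℝ, ∑' k : ℕ, y ^ k / k.factorial = Real.exp y := by
    intro y
    rw [Real.exp_eq_exp_ℝ, NormedSpace.exp_eq_tsum_div]
  set coef : ℕ → ℝ := fun k => Real.exp (-lam) * (lam ^ k / k.factorial) with hcoefdef
  have hcoefnn : ∀ k, 0 ≤ coef k := by
    intro k
    rw [hcoefdef]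
    positivity
  have hcoefsummable : Summable coef :=
    (Real.summable_pow_div_factorial lam).mul_left _
  have hcoeftsum : ∑' k, coef k = 1 := by
    rw [hcoefdef, tsum_mul_left, hexpsum, ← Real.exp_add]
    simp
  set ρ : Measure (EuclideanSpace ℝ (Fin d)) :=
    Measure.sum (fun k => ENNReal.ofReal (coef k) • convPow νh k) with hρdef
  haveI hρP : IsProbabilityMeasure ρ := by
    constructor
    rw [hρdef, Measure.sum_apply _ MeasurableSet.univ]
    simp_rw [Measure.smul_apply, measure_univ, smul_eq_mul, mul_one]
    rw [← ENNReal.ofReal_tsum_of_nonneg hcoefnn hcoefsummable, hcoeftsum,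
      ENNReal.ofReal_one]
  have hρ : ∀ ξ : EuclideanSpace ℝ (Fin d),
      charFunOf ρ ξ = ((Real.exp (lam *
        ((1 - L⁻¹ * (Real.log (1+‖ξ‖^α) - Real.log (1+c*‖ξ‖^α))) - 1)) : ℝ) : ℂ) := by
    intro ξ
    set x : ℝ := 1 - L⁻¹ * (Real.log (1+‖ξ‖^α) - Real.log (1+c*‖ξ‖^α)) with hxdef
    rw [charFunOf, hρdef, integral_sum_measure (integrable_kernel ρ ξ)]
    have hterm : ∀ k : ℕ,
        (∫ y, Complex.exp (Complex.I * (inner ℝ ξ y : ℝ))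
          ∂(ENNReal.ofReal (coef k) • convPow νh k)) = ((coef k * x ^ k : ℝ) : ℂ) := by
      intro k
      rw [integral_smul_measure, ENNReal.toReal_ofReal (hcoefnn k)]
      have hch : (∫ y, Complex.exp (Complex.I * (inner ℝ ξ y : ℝ)) ∂(convPow νh k))
          = charFunOf (convPow νh k) ξ := rfl
      rw [hch, charFunOf_convPow, hνh, ← hxdef, ← Complex.ofReal_pow,
        Complex.ofReal_mul, Complex.real_smul]
    simp_rw [hterm]
    rw [← Complex.ofReal_tsum]
    congr 1
    have hptw : ∀ k : ℕ, coef k * x ^ k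
        = Real.exp (-lam) * ((lam * x) ^ k / k.factorial) := by
      intro k
      rw [hcoefdef, mul_pow]
      ring
    simp_rw [hptw]
    rw [tsum_mul_left, hexpsum, ← Real.exp_add]
    congr 1
    ring
  refine ⟨ρ, hρP, fun ξ => ?_⟩
  have hs0 : 0 ≤ ‖ξ‖ ^ α := Real.rpow_nonneg (norm_nonneg _) _
  have hnrm : ‖b⁻¹ • ξ‖ ^ α = c * ‖ξ‖ ^ α := by
    rw [norm_smul, Real.norm_eq_abs, abs_of_nonneg hbi0.le,
      Real.mul_rpow hbi0.le (norm_nonneg _)]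
  rw [hχ ξ, hχ (b⁻¹ • ξ), hρ ξ, hnrm, ← Complex.ofReal_mul]
  congr 1
  have h1s : (0:ℝ) < 1 + ‖ξ‖ ^ α := by linarith
  have h1cs : (0:ℝ) < 1 + c * ‖ξ‖ ^ α := by nlinarith
  have harg : lam * ((1 - L⁻¹ * (Real.log (1+‖ξ‖^α) - Real.log (1+c*‖ξ‖^α))) - 1)
      = t * Real.log (1+c*‖ξ‖^α) - t * Real.log (1+‖ξ‖^α) := by
    rw [hlamdef]
    field_simp
    ring
  rw [harg, Real.exp_sub, Real.rpow_def_of_pos h1cs, Real.rpow_def_of_pos h1s,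
    mul_comm (Real.log (1+c*‖ξ‖^α)) t, mul_comm (Real.log (1+‖ξ‖^α)) t]
  have e1 := Real.exp_ne_zero (t * Real.log (1+c*‖ξ‖^α))
  have e2 := Real.exp_ne_zero (t * Real.log (1+‖ξ‖^α))
  field_simp
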